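/- Let E be a directed graph and let G ⊆ E^0 ∪ E^1 be a finite set with G^0 := G ∩ E^0, G^1 := G ∩ E^1 and r(G^1) ⊆ G^0. Form the finite graph E_G with vertex set E_G^0 := G^1 ∪ {v ∈ G^0 : s^{-1}(v) = ∅ or v = s(e) for some e ∈ E^1 \ G^1} and edge set E_G^1 := {(e, f) ∈ G^1 × E_G^0 : r(e) = s(f)} (where s(f) = f when f is a vertex), with source s(e,f) = e and range r(e,f) = f. If E contains no closed path, then E_G contains no closed path. -/

import Mathlib

/-- A directed graph `E = (E⁰, E¹, r, s)`: `V` is the vertex set `E⁰`, `Edg` is the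
edge set `E¹`, and `s`, `r` give the source and range of each edge. -/
structure DGraph (V : Type*) (Edg : Type*) where
  s : Edg → V
  r : Edg → V

namespace DGraph

variable {V Edg : Type*}

/-- There is an edge from `v` to `w`. -/
def Adj (G : DGraph V Edg) (v w : V) : Prop := ∃ e, G.s e = v ∧ G.r e = w

/-- There is a path (possibly of length zero, i.e. a vertex) from `v` to `w`. -/
def Reaches (G : DGraph V Edg) : V → V → Prop := Relation.ReflTransGen G.Adj

/-- A subset `X ⊆ E⁰` is hereditary if `r(e) ∈ X` whenever `s(e) ∈ X`. -/
def Hereditary (G : DGraph V Edg) (X : Set V) : Prop := ∀ e, G.s e ∈ X → G.r e ∈ X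

/-- A vertex is a finite emitter if `s⁻¹(v)` is finite and nonempty. -/
def FiniteEmitter (G : DGraph V Edg) (v : V) : Prop :=
  {e | G.s e = v}.Finite ∧ {e | G.s e = v}.Nonempty

/-- A subset `X ⊆ E⁰` is saturated if every finite emitter `v` with
`r(s⁻¹(v)) ⊆ X` lies in `X`. -/
def Saturated (G : DGraph V Edg) (X : Set V) : Prop :=
  ∀ v, FiniteEmitter G v → (∀ e, G.s e = v → G.r e ∈ X) → v ∈ X

/-- The hereditary saturated closure of `X`: the smallest hereditary and saturated
subset of `E⁰` containing `X`. -/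
def satClosure (G : DGraph V Edg) (X : Set V) : Set V :=
  ⋂₀ {Y | Hereditary G Y ∧ Saturated G Y ∧ X ⊆ Y}

/-- The consecutive edges of a path match up: `r(eᵢ) = s(eᵢ₊₁)`. -/
def IsChain (G : DGraph V Edg) (p : List Edg) : Prop :=
  List.Chain' (fun e f => G.r e = G.s f) p

/-- `p` is a closed path (of length ≥ 1) based at `v`. -/
def IsClosedPathAt (G : DGraph V Edg) (p : List Edg) (v : V) : Prop :=
  ∃ hne : p ≠ [], IsChain G p ∧ G.s (p.head hne) = v ∧ G.r (p.getLast hne) = v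

/-- `p` is a closed path (of length ≥ 1). -/
def IsClosedPath (G : DGraph V Edg) (p : List Edg) : Prop := ∃ v, IsClosedPathAt G p v

/-- The vertex set `α⁰ = {s(e₁), …, s(eₙ)}` of a path. -/
def pathVerts (G : DGraph V Edg) (p : List Edg) : Set V := {w | ∃ e ∈ p, G.s e = w}

/-- An exit of a closed path `e₁⋯eₙ` is an edge `f` with `s(f) = s(eᵢ)` and
`f ≠ eᵢ` for some `i`. -/
def IsExitOf (G : DGraph V Edg) (f : Edg) (p : List Edg) : Prop :=
  ∃ e ∈ p, G.s f = G.s e ∧ f ≠ e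

/-- `p` is a simple closed path based at `v`: a closed path whose sources are
pairwise distinct. -/
def IsSimpleClosedPathAt (G : DGraph V Edg) (p : List Edg) (v : V) : Prop :=
  IsClosedPathAt G p v ∧ (p.map G.s).Nodup

end DGraph

/-- The vertex set `E_G⁰ = G¹ ∪ {v ∈ G⁰ : s⁻¹(v) = ∅ or v = s(e) for some e ∈ E¹ \ G¹}`,
realized inside the type `Edg ⊕ V`. -/
def EGVerts {V Edg : Type*} (G : DGraph V Edg) (G0 : Set V) (G1 : Set Edg) :
    Set (Edg ⊕ V) :=
  Sum.inl '' G1 ∪ Sum.inr '' {v ∈ G0 | (∀ e, G.s e ≠ v) ∨ ∃ e, e ∉ G1 ∧ G.s e = v}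

/-- For a vertex of `E_G` (an edge of `E` or a vertex of `E`), the corresponding
source vertex of `E` (`s(f) = f` when `f` is a vertex). -/
def EGsrc {V Edg : Type*} (G : DGraph V Edg) : Edg ⊕ V → V
  | Sum.inl e => G.s e
  | Sum.inr v => v

/-- The graph `E_G`: edges are pairs `(e, f) ∈ G¹ × E_G⁰` with `r(e) = s(f)`,
with source `e` and range `f`. -/
def EGraph {V Edg : Type*} (G : DGraph V Edg) (G0 : Set V) (G1 : Set Edg) :
    DGraph (Edg ⊕ V)
      {p : Edg × (Edg ⊕ V) // p.1 ∈ G1 ∧ p.2 ∈ EGVerts G G0 G1 ∧ G.r p.1 = EGsrc G p.2} where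
  s := fun p => Sum.inl p.1.1
  r := fun p => p.1.2

/-- for a finite `G ⊆ E⁰ ∪ E¹` with `r(G¹) ⊆ G⁰`, if `E` contains
no closed path then neither does `E_G`. -/
theorem stmt16 {V Edg : Type*} (G : DGraph V Edg) (G0 : Set V) (G1 : Set Edg)
    (h0 : G0.Finite) (h1 : G1.Finite) (hr : ∀ e ∈ G1, G.r e ∈ G0)
    (hacyc : ∀ p : List Edg, ¬ G.IsClosedPath p) :
    ∀ q : List {p : Edg × (Edg ⊕ V) //
        p.1 ∈ G1 ∧ p.2 ∈ EGVerts G G0 G1 ∧ G.r p.1 = EGsrc G p.2},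
      ¬ (EGraph G G0 G1).IsClosedPath q := by
  rintro q ⟨v, hne, hchain, hhead, hlast⟩
  apply hacyc (q.map fun x => x.1.1)
  have hne' : q.map (fun x => x.1.1) ≠ [] := by simpa using hne
  -- hhead : Sum.inl (q.head hne).1.1 = v ; hlast : (q.getLast hne).1.2 = v
  simp only [DGraph.IsClosedPath, DGraph.IsClosedPathAt, DGraph.IsChain, EGraph] at hchain hhead hlast ⊢
  refine ⟨G.s ((q.head hne).1.1), hne', ?_, ?_, ?_⟩
  · unfold List.Chain' at hchain ⊢
    rw [List.isChain_map]
    refine hchain.imp ?_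
    intro a b hab
    rw [a.2.2.2, hab]
    rfl
  · rw [List.head_map]
  · rw [List.getLast_map]
    rw [(q.getLast hne).2.2.2, hlast, ← hhead]
    rfl
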